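/- Let γ ≥ 2/3 and fₙ(x,y) := φₙ(y). Then for every n ≥ 1 one has ⟨fₙ, H₀ fₙ⟩ ≤ δₙ, and for every n ≥ 2 one has ⟨fₙ, (H₀ − γT₁) fₙ⟩ ≤ δₙ − γ < −γ + (2/3)ⁿ = −γ + ⟨fₙ, T₂ fₙ⟩. -/

import Mathlib

open MeasureTheory Filter Topology Metric

noncomputable section

namespace EfimovExample

/-- `pₙ = 1 - 2⁻ⁿ` (so `p₀ = 0`, `p₁ = 1/2`, ...). -/
def p (n : ℕ) : ℝ := 1 - (1 / 2 : ℝ) ^ n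

/-- `qₙ = (p_{n-1} + pₙ)/2`, the midpoint of `[p_{n-1}, pₙ]`. -/
def q (n : ℕ) : ℝ := (p (n - 1) + p n) / 2

/-- `ξₙ(y) = π (y - p_{n-1})/(pₙ - p_{n-1})` on `[p_{n-1}, pₙ]` and `0` elsewhere. -/
def ξ (n : ℕ) (y : ℝ) : ℝ :=
  if y ∈ Set.Icc (p (n - 1)) (p n) then
    Real.pi * (y - p (n - 1)) / (p n - p (n - 1))
  else 0

/-- `φₙ(y) = 2^{(n+1)/2} sin (ξₙ(y))`. -/
def φ (n : ℕ) (y : ℝ) : ℝ := 2 ^ ((n + 1 : ℝ) / 2) * Real.sin (ξ n y)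

/-- The kernel `k₂(y,t) = Σ_{n ≥ 1} (2/3)ⁿ φₙ(y) φₙ(t)`. -/
def k₂ (y t : ℝ) : ℝ := ∑' n : ℕ, (2 / 3 : ℝ) ^ (n + 1) * φ (n + 1) y * φ (n + 1) t

/-- The tent function `rₙ`, supported on `[p_{n-1}, pₙ]` with peak `1` at `qₙ`. -/
def r (n : ℕ) (x : ℝ) : ℝ :=
  if x ∈ Set.Icc (p (n - 1)) (q n) then (x - p (n - 1)) / (q n - p (n - 1))
  else if x ∈ Set.Icc (q n) (p n) then (p n - x) / (p n - q n)
  else 0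

/-- `u(x) = 0` on `[0, 1/2]`, and `u(x) = Σ_{n ≥ 1} δₙ rₙ(x)` for `x > 1/2`. -/
def u (δ : ℕ → ℝ) (x : ℝ) : ℝ :=
  if x ≤ 1 / 2 then 0 else ∑' n : ℕ, δ (n + 1) * r (n + 1) x

/-- Lebesgue measure on `[0,1]`. -/
def μI : Measure ℝ := volume.restrict (Set.Icc 0 1)

/-- Lebesgue measure on `[0,1]²`. -/
def μI2 : Measure (ℝ × ℝ) := μI.prod μI


lemma p_zero : p 0 = 0 := by simp [p]
lemma p_one : p 1 = 1/2 := by norm_num [p]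
lemma p_nonneg (n : ℕ) : 0 ≤ p n := by
  have : (1/2:ℝ)^n ≤ 1 := pow_le_one₀ (by norm_num) (by norm_num)
  unfold p; linarith
lemma p_le_one (n : ℕ) : p n ≤ 1 := by
  have : (0:ℝ) ≤ (1/2:ℝ)^n := by positivity
  unfold p; linarith
lemma p_succ_sub (n : ℕ) : p (n+1) - p n = (1/2:ℝ)^(n+1) := by
  simp only [p, pow_succ]; ring
lemma p_lt_succ (n : ℕ) : p n < p (n+1) := by
  have := p_succ_sub n
  have h2 : (0:ℝ) < (1/2:ℝ)^(n+1) := by positivity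
  linarith
lemma p_mono : StrictMono p := strictMono_nat_of_lt_succ p_lt_succ
lemma half_le_p {n : ℕ} (hn : 1 ≤ n) : 1/2 ≤ p n := by
  have := p_mono.monotone hn
  rwa [p_one] at this
lemma q_succ (n : ℕ) : q (n+1) = (p n + p (n+1))/2 := by simp [q]
lemma q_sub (n : ℕ) : q (n+1) - p n = (1/2:ℝ)^(n+2) := by
  have := p_succ_sub n
  simp only [q_succ, pow_succ] at *
  linarith
lemma sub_q (n : ℕ) : p (n+1) - q (n+1) = (1/2:ℝ)^(n+2) := by
  have := p_succ_sub n
  simp only [q_succ, pow_succ] at *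
  linarith

lemma sin_xi_eq_zero {n : ℕ} {y : ℝ} (h : y ∉ Set.Ioo (p n) (p (n+1))) :
    Real.sin (ξ (n+1) y) = 0 := by
  unfold ξ
  simp only [Nat.add_sub_cancel]
  split_ifs with hy
  · rcases hy with ⟨h1, h2⟩
    rcases lt_or_eq_of_le h1 with h1 | h1
    · have hy2 : y = p (n+1) := by
        by_contra hc
        exact h ⟨h1, lt_of_le_of_ne h2 hc⟩
      rw [hy2]
      have hd : p (n+1) - p n ≠ 0 := ne_of_gt (by linarith [p_lt_succ n])
      rw [mul_div_assoc, div_self hd, mul_one, Real.sin_pi]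
    · rw [← h1]; simp
  · simp

lemma phi_eq_zero {n : ℕ} {y : ℝ} (h : y ∉ Set.Ioo (p n) (p (n+1))) :
    φ (n+1) y = 0 := by
  simp [φ, sin_xi_eq_zero h]

lemma phi_mul_phi {m n : ℕ} (hmn : m ≠ n) (y : ℝ) : φ (m+1) y * φ (n+1) y = 0 := by
  rcases Ne.lt_or_gt hmn with h | h
  · by_cases hy : y ∈ Set.Ioo (p m) (p (m+1))
    · have hle : p (m+1) ≤ p n := p_mono.monotone h
      have : y ∉ Set.Ioo (p n) (p (n+1)) := by
        intro hy2
        exact absurd hy2.1 (not_lt.mpr (le_trans (le_of_lt hy.2) hle))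
      rw [phi_eq_zero this, mul_zero]
    · rw [phi_eq_zero hy, zero_mul]
  · by_cases hy : y ∈ Set.Ioo (p n) (p (n+1))
    · have hnm : p (n+1) ≤ p m := p_mono.monotone h
      have : y ∉ Set.Ioo (p m) (p (m+1)) := by
        intro hy2
        exact absurd hy2.1 (not_lt.mpr (le_trans (le_of_lt hy.2) hnm))
      rw [phi_eq_zero this, zero_mul]
    · rw [phi_eq_zero hy, mul_zero]

lemma r_eq_zero {n : ℕ} {y : ℝ} (h : y ∉ Set.Ioo (p n) (p (n+1))) : r (n+1) y = 0 := by
  have hq1 := q_sub n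
  have hq2 := sub_q n
  have hpow : (0:ℝ) < (1/2:ℝ)^(n+2) := by positivity
  unfold r
  simp only [Nat.add_sub_cancel]
  rw [Set.mem_Ioo, not_and_or] at h
  rcases h with h1 | h2
  · have h1 : y ≤ p n := not_lt.mp h1
    split_ifs with ha hb
    · have : y = p n := le_antisymm h1 ha.1
      rw [this]; simp
    · have : q (n+1) ≤ y := hb.1
      linarith
    · rfl
  · have h2 : p (n+1) ≤ y := not_lt.mp h2
    split_ifs with ha hb
    · have : y ≤ q (n+1) := ha.2
      linarith
    · have : y = p (n+1) := le_antisymm hb.2 h2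
      rw [this]; simp
    · rfl

lemma r_nonneg (n : ℕ) (y : ℝ) : 0 ≤ r (n+1) y := by
  have hq1 := q_sub n
  have hq2 := sub_q n
  have hpow : (0:ℝ) < (1/2:ℝ)^(n+2) := by positivity
  unfold r
  simp only [Nat.add_sub_cancel]
  split_ifs with ha hb
  · exact div_nonneg (by linarith [ha.1]) (by linarith)
  · exact div_nonneg (by linarith [hb.2]) (by linarith)
  · exact le_refl 0

lemma r_le_one (n : ℕ) (y : ℝ) : r (n+1) y ≤ 1 := by
  have hq1 := q_sub n
  have hq2 := sub_q n
  have hpow : (0:ℝ) < (1/2:ℝ)^(n+2) := by positivity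
  unfold r
  simp only [Nat.add_sub_cancel]
  split_ifs with ha hb
  · rw [div_le_one (by linarith)]; linarith [ha.2]
  · rw [div_le_one (by linarith)]; linarith [hb.1]
  · norm_num

section uLemmas
variable {δ : ℕ → ℝ} (hδ₁ : δ 1 = 1)
    (hδ : ∀ n : ℕ, 2 ≤ n → 0 ≤ δ n ∧ δ n ≤ (Real.sqrt 2 / 3) ^ n)

include hδ₁ hδ in
lemma delta_nonneg (k : ℕ) : 0 ≤ δ (k+1) := by
  rcases Nat.eq_zero_or_pos k with hk | hk
  · subst hk; rw [hδ₁]; norm_num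
  · exact (hδ (k+1) (by omega)).1

lemma sqrt2_lt : Real.sqrt 2 < 3/2 := by
  nlinarith [Real.sq_sqrt (show (0:ℝ) ≤ 2 by norm_num), Real.sqrt_nonneg 2]

lemma c_mem : 0 ≤ Real.sqrt 2 / 3 ∧ Real.sqrt 2 / 3 < 1 := by
  constructor
  · positivity
  · have := sqrt2_lt; linarith

def Bd (k : ℕ) : ℝ := if k = 0 then 0 else (Real.sqrt 2 / 3) ^ (k+1)

lemma summable_Bd : Summable Bd := by
  apply (summable_nat_add_iff 1).mp
  have : Summable (fun k : ℕ => (Real.sqrt 2 / 3) ^ (k+2)) := by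
    simp_rw [pow_add]
    exact (summable_geometric_of_lt_one c_mem.1 c_mem.2).mul_right _
  exact this.congr (fun k => by simp [Bd, pow_add]; ring)

lemma tsum_Bd_le : ∑' k, Bd k ≤ 1/2 := by
  have hs := summable_Bd
  rw [Summable.tsum_eq_zero_add hs]
  have h1 : ∑' k : ℕ, Bd (k+1) = (Real.sqrt 2/3)^2 * (1 - Real.sqrt 2/3)⁻¹ := by
    have : ∀ k : ℕ, Bd (k+1) = (Real.sqrt 2/3)^2 * (Real.sqrt 2/3)^k := by
      intro k; simp [Bd, pow_add]; ring
    rw [tsum_congr this, tsum_mul_left, tsum_geometric_of_lt_one c_mem.1 c_mem.2]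
  rw [h1]
  have hc2 : (Real.sqrt 2/3)^2 = 2/9 := by
    rw [div_pow, Real.sq_sqrt (by norm_num : (0:ℝ) ≤ 2)]; norm_num
  have hge : (1/2:ℝ) ≤ 1 - Real.sqrt 2/3 := by have := sqrt2_lt; linarith
  have hinv : (1 - Real.sqrt 2/3)⁻¹ ≤ 2 := by
    have := inv_anti₀ (show (0:ℝ) < 1/2 by norm_num) hge
    norm_num at this
    linarith
  rw [Bd, if_pos rfl, hc2]
  have : (0:ℝ) ≤ (1 - Real.sqrt 2/3)⁻¹ := by positivity
  nlinarith

include hδ₁ hδ in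
lemma term_le_Bd {x : ℝ} (hx : ¬ x ≤ 1/2) (k : ℕ) : δ (k+1) * r (k+1) x ≤ Bd k := by
  rcases Nat.eq_zero_or_pos k with hk | hk
  · subst hk
    have : r 1 x = 0 := r_eq_zero (n := 0) (by
      intro hy; rw [p_one] at hy; exact hx (le_of_lt hy.2))
    simp [this, Bd]
  · have h1 : δ (k+1) ≤ (Real.sqrt 2/3)^(k+1) := (hδ (k+1) (by omega)).2
    have h0 : 0 ≤ δ (k+1) := delta_nonneg hδ₁ hδ k
    calc δ (k+1) * r (k+1) x ≤ δ (k+1) * 1 :=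
          mul_le_mul_of_nonneg_left (r_le_one k x) h0
      _ = δ (k+1) := mul_one _
      _ ≤ (Real.sqrt 2/3)^(k+1) := h1
      _ = Bd k := by rw [Bd, if_neg (by omega)]

include hδ₁ hδ in
lemma summable_term {x : ℝ} (hx : ¬ x ≤ 1/2) :
    Summable (fun k => δ (k+1) * r (k+1) x) :=
  Summable.of_nonneg_of_le
    (fun k => mul_nonneg (delta_nonneg hδ₁ hδ k) (r_nonneg k x))
    (term_le_Bd hδ₁ hδ hx) summable_Bd

include hδ₁ hδ in
lemma u_nonneg (x : ℝ) : 0 ≤ u δ x := by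
  unfold u
  split_ifs with hx
  · exact le_refl 0
  · exact tsum_nonneg (fun k => mul_nonneg (delta_nonneg hδ₁ hδ k) (r_nonneg k x))

include hδ₁ hδ in
lemma u_le_half (x : ℝ) : u δ x ≤ 1/2 := by
  unfold u
  split_ifs with hx
  · norm_num
  · calc ∑' k, δ (k+1) * r (k+1) x ≤ ∑' k, Bd k :=
        Summable.tsum_le_tsum (term_le_Bd hδ₁ hδ hx) (summable_term hδ₁ hδ hx) summable_Bd
      _ ≤ 1/2 := tsum_Bd_le

lemma u_mul_phi_sq {m : ℕ} (hm : 1 ≤ m) (y : ℝ) :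
    u δ y * φ (m+1) y ^ 2 = δ (m+1) * r (m+1) y * φ (m+1) y ^ 2 := by
  by_cases hy : y ∈ Set.Ioo (p m) (p (m+1))
  · have hhalf : ¬ y ≤ 1/2 := by
      have : (1:ℝ)/2 ≤ p m := half_le_p hm
      push_neg; linarith [hy.1]
    unfold u
    rw [if_neg hhalf]
    congr 1
    rw [tsum_eq_single m]
    intro k hk
    have : r (k+1) y = 0 := by
      apply r_eq_zero
      intro hy2
      rcases Nat.lt_or_ge k m with h | h
      · have : p (k+1) ≤ p m := p_mono.monotone h
        exact absurd hy2.2 (not_lt.mpr (le_trans this (le_of_lt hy.1)))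
      · have hkm : m < k := lt_of_le_of_ne h (fun he => hk he.symm)
        have : p (m+1) ≤ p k := p_mono.monotone hkm
        exact absurd hy2.1 (not_lt.mpr (le_trans (le_of_lt hy.2) this))
    rw [this, mul_zero]
  · rw [phi_eq_zero hy]
    ring

omit hδ₁ hδ in
lemma u_mul_phi_one_sq (y : ℝ) : u δ y * φ 1 y ^ 2 = 0 := by
  by_cases hy : y ≤ 1/2
  · unfold u; rw [if_pos hy, zero_mul]
  · have : φ 1 y = 0 := phi_eq_zero (n := 0) (by
      intro h2; rw [p_one] at h2; exact hy (le_of_lt h2.2))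
    rw [this]; ring

end uLemmas
lemma measurable_xi (n : ℕ) : Measurable (ξ n) := by
  unfold ξ
  exact Measurable.ite measurableSet_Icc
    (((measurable_id.sub_const _).const_mul _).div_const _) measurable_const

lemma measurable_phi (n : ℕ) : Measurable (φ n) :=
  (Real.measurable_sin.comp (measurable_xi n)).const_mul _

lemma two_rpow_sq (n : ℕ) :
    ((2:ℝ) ^ (((n:ℝ) + 1 + 1) / 2)) ^ 2 = (2:ℝ) ^ (n + 2) := by
  rw [← Real.rpow_natCast ((2:ℝ) ^ (((n:ℝ) + 1 + 1) / 2)) 2,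
    ← Real.rpow_mul (by norm_num : (0:ℝ) ≤ 2)]
  rw [show (((n:ℝ) + 1 + 1) / 2) * (2:ℕ) = ((n:ℕ) + 2 : ℕ) by push_cast; ring]
  exact Real.rpow_natCast 2 (n+2)

lemma phi_sq_eq (n : ℕ) (y : ℝ) :
    φ (n+1) y ^ 2 = Set.indicator (Set.Icc (p n) (p (n+1)))
      (fun y => (2:ℝ)^(n+2) *
        Real.sin (Real.pi * (y - p n) / (p (n+1) - p n)) ^ 2) y := by
  unfold φ ξ
  simp only [Nat.add_sub_cancel]
  by_cases hy : y ∈ Set.Icc (p n) (p (n+1))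
  · rw [if_pos hy, Set.indicator_of_mem hy, mul_pow]
    congr 1
    push_cast
    exact two_rpow_sq n
  · rw [if_neg hy, Set.indicator_of_notMem hy, Real.sin_zero]
    ring

instance : IsProbabilityMeasure μI := by
  constructor
  rw [μI, Measure.restrict_apply_univ, Real.volume_Icc]
  norm_num

instance : IsProbabilityMeasure μI2 := by
  rw [μI2]; infer_instance

lemma integral_sin_sq_interval (a b : ℝ) (hab : a < b) :
    ∫ y in a..b, Real.sin (Real.pi * (y - a) / (b - a)) ^ 2 = (b - a) / 2 := by
  have hba : b - a ≠ 0 := ne_of_gt (by linarith)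
  have hc : Real.pi / (b - a) ≠ 0 := div_ne_zero Real.pi_ne_zero hba
  have key : ∀ y : ℝ, Real.pi * (y - a) / (b - a)
      = (Real.pi / (b - a)) * y + (-(Real.pi / (b - a)) * a) := by
    intro y; field_simp; ring
  simp_rw [key]
  rw [intervalIntegral.integral_comp_mul_add (fun x => Real.sin x ^ 2) hc]
  have e1 : Real.pi / (b - a) * a + -(Real.pi / (b - a)) * a = 0 := by ring
  have e2 : Real.pi / (b - a) * b + -(Real.pi / (b - a)) * a = Real.pi := by
    field_simp; ring
  rw [e1, e2, integral_sin_sq]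
  rw [Real.sin_pi, Real.sin_zero]
  rw [smul_eq_mul]
  field_simp
  simp

lemma integral_phi_sq (n : ℕ) : ∫ y, φ (n+1) y ^ 2 ∂μI = 1 := by
  have hsub : Set.Icc (p n) (p (n+1)) ⊆ Set.Icc (0:ℝ) 1 :=
    Set.Icc_subset_Icc (p_nonneg n) (p_le_one (n+1))
  have h1 : ∫ y, φ (n+1) y ^ 2 ∂μI
      = ∫ y in Set.Icc (p n) (p (n+1)),
          (2:ℝ)^(n+2) * Real.sin (Real.pi * (y - p n) / (p (n+1) - p n)) ^ 2 := by
    rw [μI]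
    rw [show (fun y => φ (n+1) y ^ 2) = Set.indicator (Set.Icc (p n) (p (n+1)))
      (fun y => (2:ℝ)^(n+2) *
        Real.sin (Real.pi * (y - p n) / (p (n+1) - p n)) ^ 2) from funext (phi_sq_eq n)]
    rw [integral_indicator measurableSet_Icc, Measure.restrict_restrict measurableSet_Icc,
      Set.inter_eq_self_of_subset_left hsub]
  rw [h1, MeasureTheory.integral_Icc_eq_integral_Ioc,
    ← intervalIntegral.integral_of_le (le_of_lt (p_lt_succ n)),
    intervalIntegral.integral_const_mul, integral_sin_sq_interval _ _ (p_lt_succ n),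
    p_succ_sub n]
  rw [show (2:ℝ)^(n+2) = 2^(n+1) * 2 by ring]
  rw [show ((1:ℝ)/2)^(n+1) = ((2:ℝ)^(n+1))⁻¹ by rw [one_div, inv_pow]]
  field_simp
lemma ae_snd_lift {P : ℝ → Prop} (h : ∀ᵐ y ∂μI, P y) : ∀ᵐ z ∂μI2, P z.2 := by
  rw [ae_iff] at h ⊢
  set bad := {y | ¬ P y}
  have hsub : {z : ℝ × ℝ | ¬ P z.2} ⊆ Set.univ ×ˢ toMeasurable μI bad := by
    intro z hz
    exact ⟨Set.mem_univ _, subset_toMeasurable μI bad hz⟩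
  apply measure_mono_null hsub
  rw [μI2, Measure.prod_prod, measure_toMeasurable]
  rw [h, mul_zero]

lemma ae_fst_lift {P : ℝ → Prop} (h : ∀ᵐ x ∂μI, P x) : ∀ᵐ z ∂μI2, P z.1 := by
  rw [ae_iff] at h ⊢
  set bad := {y | ¬ P y}
  have hsub : {z : ℝ × ℝ | ¬ P z.1} ⊆ toMeasurable μI bad ×ˢ Set.univ := by
    intro z hz
    exact ⟨subset_toMeasurable μI bad hz, Set.mem_univ _⟩
  apply measure_mono_null hsub
  rw [μI2, Measure.prod_prod, measure_toMeasurable]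
  rw [h, zero_mul]

lemma ae_swap {α : Type*} [TopologicalSpace α] {f g : ℝ × ℝ → α} (h : f =ᵐ[μI2] g) :
    (fun z : ℝ × ℝ => f (z.2, z.1)) =ᵐ[μI2] (fun z => g (z.2, z.1)) := by
  have hs : MeasurePreserving (Prod.swap : ℝ × ℝ → ℝ × ℝ) μI2 μI2 := by
    rw [μI2]; exact Measure.measurePreserving_swap
  exact hs.quasiMeasurePreserving.ae_eq_comp h

lemma integral_snd_fn {E : Type*} [NormedAddCommGroup E] [NormedSpace ℝ E]
    {h : ℝ → E} (hm : AEStronglyMeasurable h μI) :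
    ∫ z, h z.2 ∂μI2 = ∫ y, h y ∂μI := by
  have hmap : Measure.map Prod.snd μI2 = μI := by
    rw [μI2, Measure.map_snd_prod, measure_univ, one_smul]
  rw [← hmap, integral_map measurable_snd.aemeasurable (by rw [hmap]; exact hm)]
lemma k2_mul_phi (m : ℕ) (y t : ℝ) :
    k₂ y t * φ (m+1) t = (2/3:ℝ)^(m+1) * φ (m+1) y * φ (m+1) t ^ 2 := by
  unfold k₂
  rw [← tsum_mul_right]
  rw [tsum_eq_single m ?_]
  · ring
  · intro k hk
    rw [mul_assoc, mul_assoc, phi_mul_phi hk t, mul_zero, mul_zero]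

lemma phi_sq_le (m : ℕ) (y : ℝ) :
    φ (m+1) y ^ 2 ≤ Set.indicator (Set.Icc (p m) (p (m+1))) (fun _ => (2:ℝ)^(m+2)) y := by
  rw [phi_sq_eq]
  by_cases hy : y ∈ Set.Icc (p m) (p (m+1))
  · rw [Set.indicator_of_mem hy, Set.indicator_of_mem hy]
    have hs : Real.sin (Real.pi * (y - p m) / (p (m+1) - p m)) ^ 2 ≤ 1 := by
      have := Real.neg_one_le_sin (Real.pi * (y - p m) / (p (m+1) - p m))
      have := Real.sin_le_one (Real.pi * (y - p m) / (p (m+1) - p m))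
      nlinarith
    have h2 : (0:ℝ) ≤ (2:ℝ)^(m+2) := by positivity
    nlinarith
  · rw [Set.indicator_of_notMem hy, Set.indicator_of_notMem hy]

lemma mu_I_Icc (m : ℕ) : μI (Set.Icc (p m) (p (m+1))) = ENNReal.ofReal ((1/2:ℝ)^(m+1)) := by
  rw [μI, Measure.restrict_apply measurableSet_Icc,
    Set.inter_eq_self_of_subset_left (Set.Icc_subset_Icc (p_nonneg m) (p_le_one (m+1))),
    Real.volume_Icc, p_succ_sub]

lemma μI2_def : μI2 = μI.prod μI := rfl

/-- For `γ ≥ 2/3` and `fₙ(x,y) = φₙ(y)`: `⟨fₙ, H₀ fₙ⟩ ≤ δₙ` for every `n ≥ 1`, and for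
`n ≥ 2`, `⟨fₙ, (H₀ - γT₁) fₙ⟩ ≤ δₙ - γ < -γ + (2/3)ⁿ = -γ + ⟨fₙ, T₂ fₙ⟩`. -/
theorem inner_estimates
    (δ : ℕ → ℝ) (hδ₁ : δ 1 = 1)
    (hδ : ∀ n : ℕ, 2 ≤ n → 0 ≤ δ n ∧ δ n ≤ (Real.sqrt 2 / 3) ^ n)
    (H₀ : Lp ℂ 2 μI2 →L[ℂ] Lp ℂ 2 μI2)
    (hH₀ : ∀ f : Lp ℂ 2 μI2,
      (H₀ f : ℝ × ℝ → ℂ) =ᵐ[μI2] fun xy => ((u δ xy.1 * u δ xy.2 : ℝ) : ℂ) * f xy)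
    (T₁ T₂ : Lp ℂ 2 μI2 →L[ℂ] Lp ℂ 2 μI2)
    (hT₁ : ∀ f : Lp ℂ 2 μI2,
      (T₁ f : ℝ × ℝ → ℂ) =ᵐ[μI2] fun xy => ∫ s, f (s, xy.2) ∂μI)
    (hT₂ : ∀ f : Lp ℂ 2 μI2,
      (T₂ f : ℝ × ℝ → ℂ) =ᵐ[μI2] fun xy => ∫ t, (k₂ xy.2 t : ℂ) * f (xy.1, t) ∂μI)
    (γ : ℝ) (hγ : 2 / 3 ≤ γ) :
    ∀ n : ℕ, 1 ≤ n →
      ∀ f : Lp ℂ 2 μI2, (f : ℝ × ℝ → ℂ) =ᵐ[μI2] (fun xy => (φ n xy.2 : ℂ)) →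
        (inner ℂ f (H₀ f) : ℂ).re ≤ δ n ∧
        (2 ≤ n →
          (inner ℂ f ((H₀ - (γ : ℂ) • T₁) f) : ℂ).re ≤ δ n - γ ∧
          δ n - γ < -γ + (2 / 3 : ℝ) ^ n ∧
          -γ + (2 / 3 : ℝ) ^ n = -γ + (inner ℂ f (T₂ f) : ℂ).re) := by
  intro n hn f hf
  obtain ⟨m, rfl⟩ : ∃ m, n = m + 1 := ⟨n - 1, by omega⟩
  have hδ0 : 0 ≤ δ (m+1) := delta_nonneg hδ₁ hδ m
  have hphim : Measurable (fun y : ℝ => φ (m+1) y ^ 2) := (measurable_phi (m+1)).pow_const 2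
  -- Step 1 : inner f (H₀ f)
  have key1 : (inner ℂ f (H₀ f) : ℂ)
      = ((∫ z, u δ z.1 * u δ z.2 * φ (m+1) z.2 ^ 2 ∂μI2 : ℝ) : ℂ) := by
    rw [MeasureTheory.L2.inner_def]
    rw [show ∫ z, (inner ℂ (f z) (H₀ f z) : ℂ) ∂μI2
        = ∫ z, ((u δ z.1 * u δ z.2 * φ (m+1) z.2 ^ 2 : ℝ) : ℂ) ∂μI2 from
      integral_congr_ae (by
        filter_upwards [hf, hH₀ f] with z h1 h2
        rw [RCLike.inner_apply, h2, h1]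
        simp only [Complex.conj_ofReal]
        push_cast
        ring)]
    exact integral_ofReal
  have hIF : ∫ z, u δ z.1 * u δ z.2 * φ (m+1) z.2 ^ 2 ∂μI2 ≤ δ (m+1) := by
    rcases Nat.eq_zero_or_pos m with hm | hm
    · subst hm
      have hz : (fun z : ℝ × ℝ => u δ z.1 * u δ z.2 * φ 1 z.2 ^ 2) = fun _ => (0:ℝ) := by
        funext z
        rw [mul_assoc, u_mul_phi_one_sq, mul_zero]
      rw [hz, integral_zero]
      rw [hδ₁]; norm_num
    · -- m ≥ 1
      set G : ℝ × ℝ → ℝ := Set.indicator (Set.univ ×ˢ Set.Icc (p m) (p (m+1)))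
        (fun _ => (1/2) * (δ (m+1) * (2:ℝ)^(m+2))) with hG
      have hGmeas : MeasurableSet (Set.univ ×ˢ Set.Icc (p m) (p (m+1)) : Set (ℝ × ℝ)) :=
        MeasurableSet.univ.prod measurableSet_Icc
      have hGint : Integrable G μI2 :=
        (integrable_const _).indicator hGmeas
      have hFG : ∀ z : ℝ × ℝ, u δ z.1 * u δ z.2 * φ (m+1) z.2 ^ 2 ≤ G z := by
        intro z
        have h1 : u δ z.2 * φ (m+1) z.2 ^ 2 = δ (m+1) * r (m+1) z.2 * φ (m+1) z.2 ^ 2 :=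
          u_mul_phi_sq hm z.2
        by_cases hz2 : z.2 ∈ Set.Icc (p m) (p (m+1))
        · have hGz : G z = (1/2) * (δ (m+1) * (2:ℝ)^(m+2)) := by
            rw [hG, Set.indicator_of_mem (Set.mem_prod.mpr ⟨Set.mem_univ _, hz2⟩)]
          have hu1 := u_nonneg hδ₁ hδ (δ := δ) z.1
          have hu2 := u_le_half hδ₁ hδ (δ := δ) z.1
          have hr0 := r_nonneg m z.2
          have hr1 := r_le_one m z.2
          have hφ0 : (0:ℝ) ≤ φ (m+1) z.2 ^ 2 := sq_nonneg _
          have hφ1 : φ (m+1) z.2 ^ 2 ≤ (2:ℝ)^(m+2) := by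
            have := phi_sq_le m z.2
            rwa [Set.indicator_of_mem hz2] at this
          rw [mul_assoc, h1, hGz]
          have t1 : δ (m+1) * r (m+1) z.2 ≤ δ (m+1) := mul_le_of_le_one_right hδ0 hr1
          have t2 : δ (m+1) * r (m+1) z.2 * φ (m+1) z.2 ^ 2 ≤ δ (m+1) * φ (m+1) z.2 ^ 2 :=
            mul_le_mul_of_nonneg_right t1 hφ0
          have t3 : δ (m+1) * φ (m+1) z.2 ^ 2 ≤ δ (m+1) * (2:ℝ)^(m+2) :=
            mul_le_mul_of_nonneg_left hφ1 hδ0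
          have t4 : u δ z.1 * (δ (m+1) * r (m+1) z.2 * φ (m+1) z.2 ^ 2)
              ≤ (1/2) * (δ (m+1) * r (m+1) z.2 * φ (m+1) z.2 ^ 2) :=
            mul_le_mul_of_nonneg_right hu2
              (mul_nonneg (mul_nonneg hδ0 hr0) hφ0)
          linarith
        · have hz2' : z.2 ∉ Set.Ioo (p m) (p (m+1)) := fun h => hz2 (Set.Ioo_subset_Icc_self h)
          have hGz : G z = 0 := by
            rw [hG, Set.indicator_of_notMem (fun h => hz2 (Set.mem_prod.mp h).2)]
          rw [hGz, phi_eq_zero hz2']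
          norm_num
      have hF0 : ∀ z : ℝ × ℝ, 0 ≤ u δ z.1 * u δ z.2 * φ (m+1) z.2 ^ 2 := fun z =>
        mul_nonneg (mul_nonneg (u_nonneg hδ₁ hδ z.1) (u_nonneg hδ₁ hδ z.2)) (sq_nonneg _)
      have hmono := integral_mono_of_nonneg (μ := μI2)
        (Filter.Eventually.of_forall hF0) hGint (Filter.Eventually.of_forall hFG)
      have hGval : ∫ z, G z ∂μI2 = δ (m+1) := by
        rw [hG, integral_indicator_const _ hGmeas]
        rw [μI2, measureReal_def, Measure.prod_prod, measure_univ, one_mul, mu_I_Icc]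
        rw [smul_eq_mul, ENNReal.toReal_ofReal (by positivity)]
        rw [show ((1:ℝ)/2)^(m+1) = ((2:ℝ)^(m+1))⁻¹ by rw [one_div, inv_pow]]
        rw [show (2:ℝ)^(m+2) = 2^(m+1) * 2 by ring]
        field_simp
      rw [hGval] at hmono
      exact hmono
  have part1 : (inner ℂ f (H₀ f) : ℂ).re ≤ δ (m+1) := by
    rw [key1, Complex.ofReal_re]
    exact hIF
  refine ⟨part1, fun hn2 => ?_⟩
  have hm1 : 1 ≤ m := by omega
  -- Step 2 : inner f (T₁ f) = 1
  have hT1ae : (fun xy : ℝ × ℝ => ∫ s, f (s, xy.2) ∂μI)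
      =ᵐ[μI2] fun xy => ((φ (m+1) xy.2 : ℝ) : ℂ) := by
    have hswap := ae_swap hf
    have h2 : ∀ᵐ y ∂μI, ∀ᵐ x ∂μI, f (x, y) = ((φ (m+1) y : ℝ) : ℂ) := by
      exact Measure.ae_ae_of_ae_prod (μ := μI) (ν := μI)
        (p := fun z : ℝ × ℝ => (f : ℝ × ℝ → ℂ) (z.2, z.1) = ((φ (m+1) z.1 : ℝ) : ℂ)) hswap
    have h3 : ∀ᵐ y ∂μI, (∫ s, f (s, y) ∂μI) = ((φ (m+1) y : ℝ) : ℂ) := by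
      filter_upwards [h2] with y hy
      rw [integral_congr_ae hy, integral_const, measureReal_def, measure_univ]
      simp
    exact ae_snd_lift h3
  have keyT1 : (inner ℂ f (T₁ f) : ℂ) = 1 := by
    rw [MeasureTheory.L2.inner_def]
    rw [show ∫ z, (inner ℂ (f z) (T₁ f z) : ℂ) ∂μI2
        = ∫ z, ((φ (m+1) z.2 ^ 2 : ℝ) : ℂ) ∂μI2 from
      integral_congr_ae (by
        filter_upwards [hf, hT₁ f, hT1ae] with z h1 h2 h3
        rw [RCLike.inner_apply, h2, h3, h1]
        simp only [Complex.conj_ofReal]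
        push_cast
        ring)]
    rw [show ∫ z : ℝ × ℝ, ((φ (m+1) z.2 ^ 2 : ℝ) : ℂ) ∂μI2
        = ((∫ z : ℝ × ℝ, φ (m+1) z.2 ^ 2 ∂μI2 : ℝ) : ℂ) from integral_ofReal]
    rw [integral_snd_fn hphim.aestronglyMeasurable, integral_phi_sq]
    norm_num
  -- Step 3 : inner f (T₂ f) = (2/3)^(m+1)
  have hT2ae : (fun xy : ℝ × ℝ => ∫ t, (k₂ xy.2 t : ℂ) * f (xy.1, t) ∂μI)
      =ᵐ[μI2] fun xy => (((2/3:ℝ)^(m+1) * φ (m+1) xy.2 : ℝ) : ℂ) := by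
    have h2 : ∀ᵐ x ∂μI, ∀ᵐ t ∂μI, f (x, t) = ((φ (m+1) t : ℝ) : ℂ) := by
      exact Measure.ae_ae_of_ae_prod (μ := μI) (ν := μI)
        (p := fun z : ℝ × ℝ => (f : ℝ × ℝ → ℂ) z = ((φ (m+1) z.2 : ℝ) : ℂ)) hf
    have h3 : ∀ᵐ x ∂μI, ∀ y : ℝ, (∫ t, (k₂ y t : ℂ) * f (x, t) ∂μI)
        = (((2/3:ℝ)^(m+1) * φ (m+1) y : ℝ) : ℂ) := by
      filter_upwards [h2] with x hx
      intro y
      have e1 : ∫ t, (k₂ y t : ℂ) * f (x, t) ∂μI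
          = ∫ t, ((k₂ y t * φ (m+1) t : ℝ) : ℂ) ∂μI := by
        apply integral_congr_ae
        filter_upwards [hx] with t ht
        rw [ht]
        push_cast
        ring
      rw [e1]
      have e2 : ∀ t : ℝ, ((k₂ y t * φ (m+1) t : ℝ) : ℂ)
          = (((2/3:ℝ)^(m+1) * φ (m+1) y * φ (m+1) t ^ 2 : ℝ) : ℂ) := by
        intro t; rw [k2_mul_phi]
      simp_rw [e2]
      rw [show ∫ t : ℝ, (((2/3:ℝ)^(m+1) * φ (m+1) y * φ (m+1) t ^ 2 : ℝ) : ℂ) ∂μI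
          = ((∫ t : ℝ, (2/3:ℝ)^(m+1) * φ (m+1) y * φ (m+1) t ^ 2 ∂μI : ℝ) : ℂ)
        from integral_ofReal]
      norm_cast
      rw [show (fun t => (2/3:ℝ)^(m+1) * φ (m+1) y * φ (m+1) t ^ 2)
          = fun t => ((2/3:ℝ)^(m+1) * φ (m+1) y) * (φ (m+1) t ^ 2) from rfl]
      rw [integral_const_mul, integral_phi_sq, mul_one]
    have h4 : ∀ᵐ z ∂μI2, ∀ y : ℝ, (∫ t, (k₂ y t : ℂ) * f (z.1, t) ∂μI)
        = (((2/3:ℝ)^(m+1) * φ (m+1) y : ℝ) : ℂ) := ae_fst_lift h3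
    filter_upwards [h4] with z hz
    exact hz z.2
  have keyT2 : (inner ℂ f (T₂ f) : ℂ) = (((2/3:ℝ)^(m+1) : ℝ) : ℂ) := by
    rw [MeasureTheory.L2.inner_def]
    rw [show ∫ z, (inner ℂ (f z) (T₂ f z) : ℂ) ∂μI2
        = ∫ z, (((2/3:ℝ)^(m+1) * φ (m+1) z.2 ^ 2 : ℝ) : ℂ) ∂μI2 from
      integral_congr_ae (by
        filter_upwards [hf, hT₂ f, hT2ae] with z h1 h2 h3
        rw [RCLike.inner_apply, h2, h3, h1]
        simp only [Complex.conj_ofReal]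
        push_cast
        ring)]
    rw [show ∫ z : ℝ × ℝ, (((2/3:ℝ)^(m+1) * φ (m+1) z.2 ^ 2 : ℝ) : ℂ) ∂μI2
        = ((∫ z : ℝ × ℝ, (2/3:ℝ)^(m+1) * φ (m+1) z.2 ^ 2 ∂μI2 : ℝ) : ℂ)
      from integral_ofReal]
    norm_cast
    rw [show (fun z : ℝ × ℝ => (2/3:ℝ)^(m+1) * φ (m+1) z.2 ^ 2)
        = fun z : ℝ × ℝ => (2/3:ℝ)^(m+1) * (fun y => φ (m+1) y ^ 2) z.2 from rfl]
    rw [integral_const_mul, integral_snd_fn hphim.aestronglyMeasurable, integral_phi_sq,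
      mul_one]
  -- Step 4 : assemble
  have hδlt : δ (m+1) < (2/3:ℝ)^(m+1) := by
    have h1 : δ (m+1) ≤ (Real.sqrt 2 / 3)^(m+1) := (hδ (m+1) hn2).2
    have h2 : (Real.sqrt 2 / 3 : ℝ)^(m+1) < (2/3:ℝ)^(m+1) := by
      apply pow_lt_pow_left₀ _ c_mem.1 (by omega)
      have := sqrt2_lt
      linarith
    linarith
  refine ⟨?_, by linarith, ?_⟩
  · have happ : (H₀ - (γ:ℂ) • T₁) f = H₀ f - (γ:ℂ) • (T₁ f) := by
      rw [ContinuousLinearMap.sub_apply, ContinuousLinearMap.smul_apply]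
    rw [happ, inner_sub_right, inner_smul_right, key1, keyT1, mul_one]
    rw [Complex.sub_re, Complex.ofReal_re, Complex.ofReal_re]
    linarith
  · rw [keyT2, Complex.ofReal_re]


end EfimovExample

end
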